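/- There is a universal constant C > 0 with the following property. Let (m_k)_{k∈ℕ} be positive reals with Σ_k m_k² < ∞, and let (c_k)_{k∈ℕ} ⊂ ℝ³ satisfy 1 + |c_j − c_k| ≥ 2^{|j−k|} for all j ≠ k. Set v(x) = 1 + Σ_k m_k/(2|x − c_k|) and f = v⁴, and let ℛ = {x ∈ ℝ³ : |x − c_k| ≥ 2 for all k}. Then the Lebesgue integral over ℛ of |∇(log f)|² is at most C·Σ_k m_k². -/

import Mathlib

open MeasureTheory

open Metric Set
open scoped ENNReal NNReal
set_option maxHeartbeats 1000000

local notation "E3" => EuclideanSpace ℝ (Fin 3)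

lemma radial4 (a : E3) {R : ℝ} (hR : 1 ≤ R) :
    ∫⁻ x in {x : E3 | R ≤ ‖x - a‖}, ENNReal.ofReal ((‖x - a‖ ^ 2)⁻¹ * (‖x - a‖ ^ 2)⁻¹) ∂volume
      ≤ volume (ball (0 : E3) 1) * ENNReal.ofReal (16 / R) := by
  have hR0 : 0 < R := lt_of_lt_of_le one_pos hR
  set B := volume (ball (0 : E3) 1) with hB
  set A : ℕ → Set E3 := fun i => {x | R * 2 ^ i ≤ ‖x - a‖ ∧ ‖x - a‖ < R * 2 ^ (i + 1)} with hA
  have hsub : {x : E3 | R ≤ ‖x - a‖} ⊆ ⋃ i, A i := by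
    intro x hx
    simp only [mem_setOf_eq] at hx
    have hex : ∃ n : ℕ, ‖x - a‖ < R * 2 ^ (n + 1) := by
      obtain ⟨n, hn⟩ := pow_unbounded_of_one_lt (y := (2:ℝ)) (‖x - a‖ / R) one_lt_two
      refine ⟨n, ?_⟩
      have h1 := (div_lt_iff₀ hR0).mp hn
      have h2 : (2:ℝ) ^ n ≤ 2 ^ (n + 1) := by
        gcongr
        · exact one_le_two
        · exact Nat.le_succ n
      calc ‖x - a‖ < 2 ^ n * R := h1
        _ = R * 2 ^ n := mul_comm _ _
        _ ≤ R * 2 ^ (n + 1) := by nlinarith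
    classical
    refine mem_iUnion.2 ⟨Nat.find hex, ?_, Nat.find_spec hex⟩
    rcases Nat.eq_zero_or_pos (Nat.find hex) with h0 | hpos
    · rw [h0]; simpa using hx
    · have hmin := Nat.find_min hex (m := Nat.find hex - 1) (Nat.sub_lt hpos one_pos)
      push_neg at hmin
      calc R * 2 ^ Nat.find hex = R * 2 ^ (Nat.find hex - 1 + 1) := by rw [Nat.sub_add_cancel hpos]
        _ ≤ ‖x - a‖ := hmin
  calc ∫⁻ x in {x : E3 | R ≤ ‖x - a‖}, ENNReal.ofReal ((‖x - a‖ ^ 2)⁻¹ * (‖x - a‖ ^ 2)⁻¹) ∂volume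
      ≤ ∫⁻ x in ⋃ i, A i, ENNReal.ofReal ((‖x - a‖ ^ 2)⁻¹ * (‖x - a‖ ^ 2)⁻¹) ∂volume :=
        lintegral_mono_set hsub
    _ ≤ ∑' i, ∫⁻ x in A i, ENNReal.ofReal ((‖x - a‖ ^ 2)⁻¹ * (‖x - a‖ ^ 2)⁻¹) ∂volume :=
        lintegral_iUnion_le _ _
    _ ≤ ∑' i, ENNReal.ofReal (8 / R * (2⁻¹ : ℝ) ^ i) * B := by
        refine ENNReal.tsum_le_tsum fun i => ?_
        have hRi : (0:ℝ) < R * 2 ^ i := by positivity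
        have step1 : ∫⁻ x in A i, ENNReal.ofReal ((‖x - a‖ ^ 2)⁻¹ * (‖x - a‖ ^ 2)⁻¹) ∂volume
            ≤ ENNReal.ofReal (((R * 2 ^ i) ^ 2)⁻¹ * ((R * 2 ^ i) ^ 2)⁻¹) * volume (A i) := by
          rw [← setLIntegral_const]
          refine setLIntegral_mono measurable_const fun x hx => ?_
          have h1 : R * 2 ^ i ≤ ‖x - a‖ := hx.1
          refine ENNReal.ofReal_le_ofReal ?_
          gcongr <;> positivity
        have step2 : volume (A i) ≤ ENNReal.ofReal ((R * 2 ^ (i + 1)) ^ 3) * B := by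
          have : A i ⊆ ball a (R * 2 ^ (i + 1)) := fun x hx => by
            rw [mem_ball, dist_eq_norm]; exact hx.2
          calc volume (A i) ≤ volume (ball a (R * 2 ^ (i + 1))) := measure_mono this
            _ = ENNReal.ofReal ((R * 2 ^ (i + 1)) ^ Module.finrank ℝ (EuclideanSpace ℝ (Fin 3)))
                * B := Measure.addHaar_ball _ _ (by positivity)
            _ = ENNReal.ofReal ((R * 2 ^ (i + 1)) ^ 3) * B := by
                rw [finrank_euclideanSpace_fin]
        calc ∫⁻ x in A i, ENNReal.ofReal ((‖x - a‖ ^ 2)⁻¹ * (‖x - a‖ ^ 2)⁻¹) ∂volume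
            ≤ ENNReal.ofReal (((R * 2 ^ i) ^ 2)⁻¹ * ((R * 2 ^ i) ^ 2)⁻¹)
                * (ENNReal.ofReal ((R * 2 ^ (i + 1)) ^ 3) * B) := by
              refine step1.trans ?_
              exact mul_le_mul_right step2 _
          _ = ENNReal.ofReal (8 / R * (2⁻¹ : ℝ) ^ i) * B := by
              rw [← mul_assoc, ← ENNReal.ofReal_mul (by positivity)]
              congr 2
              have h2 : (2:ℝ) ^ (i+1) = 2 * 2 ^ i := by ring
              rw [h2, inv_pow]
              field_simp
              ring
    _ = ENNReal.ofReal (8 / R) * (∑' i, ENNReal.ofReal ((2⁻¹ : ℝ) ^ i)) * B := by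
        rw [ENNReal.tsum_mul_right]
        congr 1
        rw [← ENNReal.tsum_mul_left]
        congr 1; funext i
        rw [← ENNReal.ofReal_mul (by positivity)]
    _ = B * ENNReal.ofReal (16 / R) := by
        have : (∑' i, ENNReal.ofReal ((2⁻¹ : ℝ) ^ i)) = 2 := by
          have h1 : ∀ i : ℕ, ENNReal.ofReal ((2⁻¹ : ℝ) ^ i) = (2⁻¹ : ℝ≥0∞) ^ i := by
            intro i
            rw [ENNReal.ofReal_pow (by norm_num)]
            congr 1
            rw [ENNReal.ofReal_inv_of_pos (by norm_num)]
            norm_num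
          simp_rw [h1, ENNReal.tsum_geometric]
          rw [ENNReal.one_sub_inv_two]
          simp
        rw [this]
        have h2 : (2 : ℝ≥0∞) = ENNReal.ofReal 2 := by norm_num
        rw [h2, ← ENNReal.ofReal_mul (by positivity), mul_comm]
        congr 1
        rw [div_mul_eq_mul_div]
        norm_num

lemma meas_aux (a b : E3) : Measurable fun x : E3 =>
    ENNReal.ofReal ((‖x - a‖ ^ 2)⁻¹ * (‖x - b‖ ^ 2)⁻¹) := by
  apply Measurable.ennreal_ofReal
  exact ((((measurable_id.sub_const a).norm.pow_const 2).inv).mul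
    (((measurable_id.sub_const b).norm.pow_const 2).inv))

lemma cross_half (a b : E3) :
    ∫⁻ x in {x : E3 | 2 ≤ ‖x - a‖ ∧ 2 ≤ ‖x - b‖ ∧ ‖x - a‖ ≤ ‖x - b‖},
        ENNReal.ofReal ((‖x - a‖ ^ 2)⁻¹ * (‖x - b‖ ^ 2)⁻¹) ∂volume
      ≤ volume (ball (0 : E3) 1) * ENNReal.ofReal (48 / Real.sqrt (1 + ‖a - b‖)) := by
  set B := volume (ball (0 : E3) 1) with hB
  set d := ‖a - b‖ with hd
  have hd0 : 0 ≤ d := norm_nonneg _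
  have hs1 : 0 < Real.sqrt (1 + d) := Real.sqrt_pos.2 (by linarith)
  set S : Set E3 := {x : E3 | 2 ≤ ‖x - a‖ ∧ 2 ≤ ‖x - b‖ ∧ ‖x - a‖ ≤ ‖x - b‖} with hS
  -- pointwise bound on S: integrand ≤ ofReal ((‖x-a‖^2)⁻¹ * (‖x-a‖^2)⁻¹)
  have hpt : ∀ x ∈ S, ENNReal.ofReal ((‖x - a‖ ^ 2)⁻¹ * (‖x - b‖ ^ 2)⁻¹)
      ≤ ENNReal.ofReal ((‖x - a‖ ^ 2)⁻¹ * (‖x - a‖ ^ 2)⁻¹) := by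
    intro x hx
    obtain ⟨h1, h2, h3⟩ := hx
    refine ENNReal.ofReal_le_ofReal ?_
    have hpow : ‖x - a‖ ^ 2 ≤ ‖x - b‖ ^ 2 := by nlinarith
    have h5 : (‖x - b‖ ^ 2)⁻¹ ≤ (‖x - a‖ ^ 2)⁻¹ := by
      rw [← one_div, ← one_div]
      exact one_div_le_one_div_of_le (by positivity) hpow
    exact mul_le_mul_of_nonneg_left h5 (by positivity)
  rcases le_or_gt d 4 with hcase | hcase
  · -- small separation
    have hsq : Real.sqrt (1 + d) ≤ 3 := by
      have h9 : Real.sqrt 9 = 3 := by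
        rw [show (9:ℝ) = 3 ^ 2 by norm_num, Real.sqrt_sq (by norm_num)]
      calc Real.sqrt (1 + d) ≤ Real.sqrt 9 := Real.sqrt_le_sqrt (by linarith)
        _ = 3 := h9
    calc ∫⁻ x in S, ENNReal.ofReal ((‖x - a‖ ^ 2)⁻¹ * (‖x - b‖ ^ 2)⁻¹) ∂volume
        ≤ ∫⁻ x in S, ENNReal.ofReal ((‖x - a‖ ^ 2)⁻¹ * (‖x - a‖ ^ 2)⁻¹) ∂volume :=
          setLIntegral_mono (meas_aux a a) hpt
      _ ≤ ∫⁻ x in {x : E3 | 2 ≤ ‖x - a‖}, ENNReal.ofReal ((‖x - a‖ ^ 2)⁻¹ * (‖x - a‖ ^ 2)⁻¹)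
            ∂volume := lintegral_mono_set (fun x hx => hx.1)
      _ ≤ B * ENNReal.ofReal (16 / 2) := radial4 a one_le_two
      _ ≤ B * ENNReal.ofReal (48 / Real.sqrt (1 + d)) := by
          refine mul_le_mul_right (ENNReal.ofReal_le_ofReal ?_) _
          rw [div_le_div_iff₀ (by norm_num) hs1]
          nlinarith
  · -- large separation
    set T := Real.sqrt d with hT
    have hTsq : T ^ 2 = d := Real.sq_sqrt hd0
    have hT2 : 2 < T := by
      have : Real.sqrt 4 < T := by
        apply Real.sqrt_lt_sqrt (by norm_num) hcase
      rwa [show (4:ℝ) = 2 ^ 2 by norm_num, Real.sqrt_sq (by norm_num)] at this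
    have hT0 : 0 < T := by linarith
    have hkey : Real.sqrt (1 + d) ≤ 3 / 2 * T := by
      have h1 : 1 + d ≤ (3 / 2 * T) ^ 2 := by nlinarith
      calc Real.sqrt (1 + d) ≤ Real.sqrt ((3 / 2 * T) ^ 2) := Real.sqrt_le_sqrt h1
        _ = 3 / 2 * T := Real.sqrt_sq (by positivity)
    -- distance to b lower bound on S
    have hbd : ∀ x ∈ S, d / 2 ≤ ‖x - b‖ := by
      intro x hx
      obtain ⟨h1, h2, h3⟩ := hx
      have htri : d ≤ ‖x - a‖ + ‖x - b‖ := by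
        calc d = ‖a - b‖ := rfl
          _ ≤ ‖a - x‖ + ‖x - b‖ := norm_sub_le_norm_sub_add_norm_sub a x b
          _ = ‖x - a‖ + ‖x - b‖ := by rw [norm_sub_rev a x]
      linarith
    have hsplit : S ⊆ (S ∩ {x : E3 | ‖x - a‖ ≤ T}) ∪ (S ∩ {x : E3 | T ≤ ‖x - a‖}) := by
      intro x hx
      rcases le_total ‖x - a‖ T with h | h
      · exact Or.inl ⟨hx, h⟩
      · exact Or.inr ⟨hx, h⟩
    have hA : ∫⁻ x in S ∩ {x : E3 | ‖x - a‖ ≤ T},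
        ENNReal.ofReal ((‖x - a‖ ^ 2)⁻¹ * (‖x - b‖ ^ 2)⁻¹) ∂volume
        ≤ B * ENNReal.ofReal (24 / Real.sqrt (1 + d)) := by
      have hconst : ∀ x ∈ S ∩ {x : E3 | ‖x - a‖ ≤ T},
          ENNReal.ofReal ((‖x - a‖ ^ 2)⁻¹ * (‖x - b‖ ^ 2)⁻¹)
          ≤ ENNReal.ofReal (4⁻¹ * (4 / d ^ 2)) := by
        intro x hx
        have hb := hbd x hx.1
        obtain ⟨⟨h1, h2, h3⟩, h4⟩ := hx
        refine ENNReal.ofReal_le_ofReal ?_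
        have hdpos : (0:ℝ) < d := by linarith
        have e1 : (‖x - a‖ ^ 2)⁻¹ ≤ 4⁻¹ := by
          rw [← one_div, show (4:ℝ)⁻¹ = 1 / 2 ^ 2 by norm_num]
          exact one_div_le_one_div_of_le (by norm_num) (by nlinarith)
        have e2 : (‖x - b‖ ^ 2)⁻¹ ≤ 4 / d ^ 2 := by
          rw [← one_div, show (4:ℝ) / d ^ 2 = 1 / ((d / 2) ^ 2) by field_simp; ring]
          exact one_div_le_one_div_of_le (by positivity) (by nlinarith)
        have e3 : (0:ℝ) ≤ (‖x - a‖ ^ 2)⁻¹ := by positivity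
        have e4 : (0:ℝ) ≤ (‖x - b‖ ^ 2)⁻¹ := by positivity
        exact mul_le_mul e1 e2 e4 (by norm_num)
      calc ∫⁻ x in S ∩ {x : E3 | ‖x - a‖ ≤ T},
            ENNReal.ofReal ((‖x - a‖ ^ 2)⁻¹ * (‖x - b‖ ^ 2)⁻¹) ∂volume
          ≤ ∫⁻ _x in S ∩ {x : E3 | ‖x - a‖ ≤ T},
              ENNReal.ofReal (4⁻¹ * (4 / d ^ 2)) ∂volume :=
            setLIntegral_mono measurable_const hconst
        _ = ENNReal.ofReal (4⁻¹ * (4 / d ^ 2)) * volume (S ∩ {x : E3 | ‖x - a‖ ≤ T}) := by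
            rw [setLIntegral_const]
        _ ≤ ENNReal.ofReal (4⁻¹ * (4 / d ^ 2)) * volume (ball a (2 * T)) := by
            refine mul_le_mul_right (measure_mono ?_) _
            intro x hx
            rw [mem_ball, dist_eq_norm]
            calc ‖x - a‖ ≤ T := hx.2
              _ < 2 * T := by linarith
        _ ≤ B * ENNReal.ofReal (24 / Real.sqrt (1 + d)) := by
            rw [Measure.addHaar_ball _ _ (by positivity), finrank_euclideanSpace_fin,
              ← mul_assoc, ← ENNReal.ofReal_mul (by positivity), mul_comm]
            refine mul_le_mul_right (ENNReal.ofReal_le_ofReal ?_) _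
            have hda : d ^ 2 = T ^ 4 := by rw [← hTsq]; ring
            have lhs_eq : 4⁻¹ * (4 / d ^ 2) * (2 * T) ^ 3 = 8 / T := by
              rw [hda]; field_simp; ring
            rw [lhs_eq, div_le_div_iff₀ hT0 hs1]
            calc 8 * Real.sqrt (1 + d) ≤ 8 * (3 / 2 * T) := by linarith
              _ ≤ 24 * T := by linarith
    have hBpart : ∫⁻ x in S ∩ {x : E3 | T ≤ ‖x - a‖},
        ENNReal.ofReal ((‖x - a‖ ^ 2)⁻¹ * (‖x - b‖ ^ 2)⁻¹) ∂volume
        ≤ B * ENNReal.ofReal (24 / Real.sqrt (1 + d)) := by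
      calc ∫⁻ x in S ∩ {x : E3 | T ≤ ‖x - a‖},
            ENNReal.ofReal ((‖x - a‖ ^ 2)⁻¹ * (‖x - b‖ ^ 2)⁻¹) ∂volume
          ≤ ∫⁻ x in S ∩ {x : E3 | T ≤ ‖x - a‖},
              ENNReal.ofReal ((‖x - a‖ ^ 2)⁻¹ * (‖x - a‖ ^ 2)⁻¹) ∂volume :=
            setLIntegral_mono (meas_aux a a) (fun x hx => hpt x hx.1)
        _ ≤ ∫⁻ x in {x : E3 | T ≤ ‖x - a‖},
              ENNReal.ofReal ((‖x - a‖ ^ 2)⁻¹ * (‖x - a‖ ^ 2)⁻¹) ∂volume :=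
            lintegral_mono_set (fun x hx => hx.2)
        _ ≤ B * ENNReal.ofReal (16 / T) := radial4 a (by linarith)
        _ ≤ B * ENNReal.ofReal (24 / Real.sqrt (1 + d)) := by
            refine mul_le_mul_right (ENNReal.ofReal_le_ofReal ?_) _
            rw [div_le_div_iff₀ hT0 hs1]
            calc 16 * Real.sqrt (1 + d) ≤ 16 * (3 / 2 * T) := by linarith
              _ = 24 * T := by ring
    calc ∫⁻ x in S, ENNReal.ofReal ((‖x - a‖ ^ 2)⁻¹ * (‖x - b‖ ^ 2)⁻¹) ∂volume
        ≤ ∫⁻ x in (S ∩ {x : E3 | ‖x - a‖ ≤ T}) ∪ (S ∩ {x : E3 | T ≤ ‖x - a‖}),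
            ENNReal.ofReal ((‖x - a‖ ^ 2)⁻¹ * (‖x - b‖ ^ 2)⁻¹) ∂volume :=
          lintegral_mono_set hsplit
      _ ≤ (∫⁻ x in S ∩ {x : E3 | ‖x - a‖ ≤ T},
            ENNReal.ofReal ((‖x - a‖ ^ 2)⁻¹ * (‖x - b‖ ^ 2)⁻¹) ∂volume)
          + ∫⁻ x in S ∩ {x : E3 | T ≤ ‖x - a‖},
            ENNReal.ofReal ((‖x - a‖ ^ 2)⁻¹ * (‖x - b‖ ^ 2)⁻¹) ∂volume :=
          lintegral_union_le _ _ _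
      _ ≤ B * ENNReal.ofReal (24 / Real.sqrt (1 + d))
          + B * ENNReal.ofReal (24 / Real.sqrt (1 + d)) := add_le_add hA hBpart
      _ ≤ B * ENNReal.ofReal (48 / Real.sqrt (1 + d)) := by
          rw [← mul_add, ← ENNReal.ofReal_add (by positivity) (by positivity)]
          refine mul_le_mul_right (ENNReal.ofReal_le_ofReal (by rw [← add_div]; gcongr
            <;> norm_num)) _

lemma tsum_pow_natAbs_le (q : ℝ≥0∞) (j : ℕ) :
    ∑' k : ℕ, q ^ ((j : ℤ) - (k : ℤ)).natAbs ≤ 2 * (1 - q)⁻¹ := by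
  set τ : ℕ → ℕ × Bool := fun k => (((j : ℤ) - (k : ℤ)).natAbs, decide (k ≤ j)) with hτ
  have hinj : Function.Injective τ := by
    intro k1 k2 h
    simp only [hτ, Prod.mk.injEq, decide_eq_decide] at h
    omega
  calc ∑' k : ℕ, q ^ ((j : ℤ) - (k : ℤ)).natAbs
      = ∑' k : ℕ, (fun p : ℕ × Bool => q ^ p.1) (τ k) := rfl
    _ ≤ ∑' p : ℕ × Bool, q ^ p.1 := ENNReal.tsum_comp_le_tsum_of_injective hinj _
    _ = ∑' i : ℕ, ∑' _b : Bool, q ^ i := ENNReal.tsum_prod (f := fun i (_ : Bool) => q ^ i)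
    _ = ∑' i : ℕ, 2 * q ^ i := by
        refine tsum_congr fun i => ?_
        rw [tsum_fintype]
        simp [two_mul]
    _ = 2 * (1 - q)⁻¹ := by rw [ENNReal.tsum_mul_left, ENNReal.tsum_geometric]

lemma pointwise_grad_bound (m : ℕ → ℝ) (c : ℕ → E3)
    (hm : ∀ k, 0 < m k) (hm2 : Summable (fun k => m k ^ 2))
    (hsep : ∀ j k : ℕ, j ≠ k → (2:ℝ) ^ ((j : ℤ) - (k : ℤ)).natAbs ≤ 1 + ‖c j - c k‖)
    (x : E3) (hx : ∀ k, 2 ≤ ‖x - c k‖) :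
    ENNReal.ofReal
        (‖gradient (fun y => Real.log ((1 + ∑' k, m k / (2 * ‖y - c k‖)) ^ 4)) x‖ ^ 2)
      ≤ 64 * (∑' k, ENNReal.ofReal (m k * (‖x - c k‖ ^ 2)⁻¹)) ^ 2 := by
  -- rewrite the function in a differentiable-friendly form
  have hfun : (fun y : E3 => Real.log ((1 + ∑' k, m k / (2 * ‖y - c k‖)) ^ 4))
      = fun y : E3 => Real.log ((1 + ∑' k, (m k / 2) * ‖y - c k‖⁻¹) ^ 4) := by
    funext y
    have h : (∑' k, m k / (2 * ‖y - c k‖)) = ∑' k, (m k / 2) * ‖y - c k‖⁻¹ :=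
      tsum_congr fun k => by ring
    rw [h]
  -- summability facts
  obtain ⟨N, hN⟩ := pow_unbounded_of_one_lt (R := ℝ) (1 + ‖x - c 0‖) one_lt_two
  have hgrow : ∀ k, N + 1 ≤ k → (2:ℝ) ^ (k - 1) ≤ ‖x - c k‖ := by
    intro k hk
    have h1 := hsep 0 k (by omega)
    have hnat : (((0:ℕ) : ℤ) - (k : ℤ)).natAbs = k := by omega
    rw [hnat] at h1
    have h2 : ‖c 0 - c k‖ ≤ ‖x - c 0‖ + ‖x - c k‖ := by
      calc ‖c 0 - c k‖ ≤ ‖c 0 - x‖ + ‖x - c k‖ := norm_sub_le_norm_sub_add_norm_sub _ _ _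
        _ = ‖x - c 0‖ + ‖x - c k‖ := by rw [norm_sub_rev]
    have h3 : (2:ℝ) ^ N ≤ 2 ^ (k - 1) := by
      apply pow_le_pow_right₀ one_le_two
      omega
    have h4 : (2:ℝ) ^ k = 2 * 2 ^ (k - 1) := by
      rw [← pow_succ']
      congr 1
      omega
    linarith
  have hrsum : Summable (fun k => (‖x - c k‖ ^ 2)⁻¹) := by
    rw [← summable_nat_add_iff (f := fun k => (‖x - c k‖ ^ 2)⁻¹) (N + 1)]
    refine Summable.of_nonneg_of_le (fun i => by positivity)
      (f := fun i => ((4:ℝ)⁻¹) ^ N * ((4:ℝ)⁻¹) ^ i) (fun i => ?_)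
      ((summable_geometric_of_lt_one (r := (4:ℝ)⁻¹) (by norm_num) (by norm_num)).mul_left _)
    have h := hgrow (i + (N + 1)) (by omega)
    have hexp : i + (N + 1) - 1 = i + N := by omega
    rw [hexp] at h
    have h2 : ((2:ℝ) ^ (i + N)) ^ 2 = 4 ^ (i + N) := by
      rw [← pow_mul, mul_comm, pow_mul]
      norm_num
    have h3 : (‖x - c (i + (N + 1))‖ ^ 2)⁻¹ ≤ ((4:ℝ) ^ (i + N))⁻¹ := by
      rw [← h2, ← one_div, ← one_div]
      refine one_div_le_one_div_of_le (by positivity) ?_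
      have h0 : (0:ℝ) < 2 ^ (i + N) := by positivity
      nlinarith
    calc (‖x - c (i + (N + 1))‖ ^ 2)⁻¹ ≤ ((4:ℝ) ^ (i + N))⁻¹ := h3
      _ = (4:ℝ)⁻¹ ^ N * (4:ℝ)⁻¹ ^ i := by rw [← inv_pow, pow_add, mul_comm]
  have hinvle : ∀ k, (‖x - c k‖ ^ 2)⁻¹ ≤ 4⁻¹ := by
    intro k
    have hk := hx k
    rw [← one_div, show (4:ℝ)⁻¹ = 1 / 2 ^ 2 by norm_num]
    exact one_div_le_one_div_of_le (by norm_num) (by nlinarith)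
  have hrsum4 : Summable (fun k => ((‖x - c k‖ ^ 2)⁻¹) ^ 2) := by
    refine Summable.of_nonneg_of_le (fun k => by positivity) (fun k => ?_) (hrsum.mul_left 4⁻¹)
    have h1 := hinvle k
    have h2 : (0:ℝ) ≤ (‖x - c k‖ ^ 2)⁻¹ := by positivity
    calc ((‖x - c k‖ ^ 2)⁻¹) ^ 2 = (‖x - c k‖ ^ 2)⁻¹ * (‖x - c k‖ ^ 2)⁻¹ := sq _
      _ ≤ 4⁻¹ * (‖x - c k‖ ^ 2)⁻¹ := mul_le_mul_of_nonneg_right h1 h2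
  have hSsum : Summable (fun k => m k * (‖x - c k‖ ^ 2)⁻¹) := by
    refine Summable.of_nonneg_of_le
      (fun k => mul_nonneg (hm k).le (by positivity)) (fun k => ?_)
      ((hm2.add hrsum4).mul_left 2⁻¹)
    have := two_mul_le_add_sq (m k) ((‖x - c k‖ ^ 2)⁻¹)
    nlinarith
  have hgsumx : Summable (fun k => (m k / 2) * ‖x - c k‖⁻¹) := by
    refine Summable.of_nonneg_of_le
      (fun k => mul_nonneg (by have := hm k; linarith) (by positivity)) (fun k => ?_)
      ((hm2.add hrsum).mul_left 2⁻¹)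
    have h1 := two_mul_le_add_sq (m k) (‖x - c k‖⁻¹)
    have h2 : (‖x - c k‖⁻¹) ^ 2 = (‖x - c k‖ ^ 2)⁻¹ := by rw [← inv_pow]
    nlinarith
  -- geometric facts on the ball
  have hy_facts : ∀ k : ℕ, ∀ y ∈ ball x 1, ‖x - c k‖ / 2 ≤ ‖y - c k‖ ∧ y - c k ≠ 0 := by
    intro k y hy
    have h1 : ‖y - x‖ < 1 := by rw [← dist_eq_norm]; exact mem_ball.mp hy
    have h2 : ‖x - c k‖ ≤ ‖x - y‖ + ‖y - c k‖ := norm_sub_le_norm_sub_add_norm_sub _ _ _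
    have h3 : ‖x - y‖ = ‖y - x‖ := norm_sub_rev _ _
    have h4 := hx k
    have h5 : ‖x - c k‖ / 2 ≤ ‖y - c k‖ := by linarith
    refine ⟨h5, fun hzero => ?_⟩
    rw [hzero, norm_zero] at h5
    linarith
  set g' : ℕ → E3 → (E3 →L[ℝ] ℝ) := fun k y =>
    ((m k / 2) * (-(‖y - c k‖ ^ 2)⁻¹)) • (fderiv ℝ (fun z : E3 => ‖z - c k‖) y) with hg'
  have hlip : ∀ k : ℕ, LipschitzWith 1 (fun z : E3 => ‖z - c k‖) := by
    intro k
    refine LipschitzWith.of_dist_le_mul fun y z => ?_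
    rw [Real.dist_eq, NNReal.coe_one, one_mul, dist_eq_norm]
    calc |‖y - c k‖ - ‖z - c k‖| ≤ ‖(y - c k) - (z - c k)‖ := abs_norm_sub_norm_le _ _
      _ = ‖y - z‖ := by rw [sub_sub_sub_cancel_right]
  have hfnl : ∀ (k : ℕ) (y : E3), ‖fderiv ℝ (fun z : E3 => ‖z - c k‖) y‖ ≤ 1 := by
    intro k y
    simpa using norm_fderiv_le_of_lipschitz ℝ (hlip k)
  have hder : ∀ (k : ℕ), ∀ y ∈ ball x 1,
      HasFDerivAt (fun z : E3 => (m k / 2) * ‖z - c k‖⁻¹) (g' k y) y := by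
    intro k y hy
    obtain ⟨hhalf, hne⟩ := hy_facts k y hy
    have hpos : 0 < ‖y - c k‖ := norm_pos_iff.mpr hne
    have hdiff : DifferentiableAt ℝ (fun z : E3 => ‖z - c k‖) y :=
      DifferentiableAt.norm ℝ (differentiableAt_id.sub (differentiableAt_const _)) hne
    have houter : HasDerivAt (fun t : ℝ => (m k / 2) * t⁻¹)
        ((m k / 2) * (-(‖y - c k‖ ^ 2)⁻¹)) ‖y - c k‖ :=
      (hasDerivAt_inv (ne_of_gt hpos)).const_mul _
    exact HasDerivAt.comp_hasFDerivAt (h₂ := fun t : ℝ => (m k / 2) * t⁻¹) y houter hdiff.hasFDerivAt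
  have hnormbound : ∀ (k : ℕ), ∀ y ∈ ball x 1, ‖g' k y‖ ≤ 2 * (m k * (‖x - c k‖ ^ 2)⁻¹) := by
    intro k y hy
    simp only [hg']
    obtain ⟨hhalf, hne⟩ := hy_facts k y hy
    have hmk := hm k
    have h4 := hx k
    have hypos : 0 < ‖y - c k‖ := norm_pos_iff.mpr hne
    have hinv : (‖y - c k‖ ^ 2)⁻¹ ≤ 4 * (‖x - c k‖ ^ 2)⁻¹ := by
      rw [← one_div, show (4:ℝ) * (‖x - c k‖ ^ 2)⁻¹ = 1 / ((‖x - c k‖ / 2) ^ 2) by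
        field_simp; norm_num]
      refine one_div_le_one_div_of_le (by positivity) (by nlinarith)
    calc ‖(m k / 2 * -(‖y - c k‖ ^ 2)⁻¹) • fderiv ℝ (fun z : E3 => ‖z - c k‖) y‖
          = ‖m k / 2 * -(‖y - c k‖ ^ 2)⁻¹‖
          * ‖fderiv ℝ (fun z : E3 => ‖z - c k‖) y‖ := norm_smul _ _
      _ ≤ ‖m k / 2 * -(‖y - c k‖ ^ 2)⁻¹‖ * 1 := by
          refine mul_le_mul_of_nonneg_left (hfnl k y) (norm_nonneg _)
      _ = (m k / 2) * (‖y - c k‖ ^ 2)⁻¹ := by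
          rw [mul_one, Real.norm_eq_abs, abs_mul, abs_neg, abs_of_pos (by linarith),
            abs_of_nonneg (by positivity)]
      _ ≤ (m k / 2) * (4 * (‖x - c k‖ ^ 2)⁻¹) :=
          mul_le_mul_of_nonneg_left hinv (by linarith)
      _ = 2 * (m k * (‖x - c k‖ ^ 2)⁻¹) := by ring
  have hx_mem : x ∈ ball x 1 := mem_ball_self one_pos
  have hu : Summable (fun k => 2 * (m k * (‖x - c k‖ ^ 2)⁻¹)) := hSsum.mul_left 2
  have htsum_deriv : HasFDerivAt (fun y : E3 => ∑' k, (m k / 2) * ‖y - c k‖⁻¹)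
      (∑' k, g' k x) x :=
    hasFDerivAt_tsum_of_isPreconnected hu isOpen_ball (convex_ball x 1).isPreconnected
      hder hnormbound hx_mem hgsumx hx_mem
  have hnorms : Summable (fun k => ‖g' k x‖) :=
    Summable.of_nonneg_of_le (fun k => norm_nonneg _) (fun k => hnormbound k x hx_mem) hu
  set S := ∑' k, (m k * (‖x - c k‖ ^ 2)⁻¹) with hSdef
  have hS0 : 0 ≤ S := tsum_nonneg (fun k => mul_nonneg (hm k).le (by positivity))
  have hDnorm : ‖∑' k, g' k x‖ ≤ 2 * S := by
    calc ‖∑' k, g' k x‖ ≤ ∑' k, ‖g' k x‖ := norm_tsum_le_tsum_norm hnorms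
      _ ≤ ∑' k, 2 * (m k * (‖x - c k‖ ^ 2)⁻¹) :=
          Summable.tsum_mono hnorms hu (fun k => hnormbound k x hx_mem)
      _ = 2 * S := tsum_mul_left
  set vx := 1 + ∑' k, (m k / 2) * ‖x - c k‖⁻¹ with hvx
  have hvx1 : 1 ≤ vx :=
    le_add_of_nonneg_right (tsum_nonneg fun k =>
      mul_nonneg (by have := hm k; linarith) (by positivity))
  have hvxpos : 0 < vx := lt_of_lt_of_le one_pos hvx1
  have hinner : HasFDerivAt (fun y : E3 => 1 + ∑' k, (m k / 2) * ‖y - c k‖⁻¹)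
      (∑' k, g' k x) x := htsum_deriv.const_add 1
  have houter2 : HasDerivAt (fun t : ℝ => Real.log (t ^ 4)) (4 * vx ^ 3 / vx ^ 4) vx := by
    have h1 : HasDerivAt (fun t : ℝ => t ^ 4) (4 * vx ^ 3) vx := by
      simpa using hasDerivAt_pow 4 vx
    exact h1.log (pow_ne_zero 4 (ne_of_gt hvxpos))
  have hcomp : HasFDerivAt (fun y : E3 => Real.log ((1 + ∑' k, (m k / 2) * ‖y - c k‖⁻¹) ^ 4))
      ((4 * vx ^ 3 / vx ^ 4) • (∑' k, g' k x)) x := HasDerivAt.comp_hasFDerivAt (h₂ := fun t : ℝ => Real.log (t ^ 4)) x houter2 hinner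
  have hgradeq : gradient (fun y : E3 => Real.log ((1 + ∑' k, (m k / 2) * ‖y - c k‖⁻¹) ^ 4)) x
      = (InnerProductSpace.toDual ℝ E3).symm
          ((4 * vx ^ 3 / vx ^ 4) • (∑' k, g' k x)) :=
    (hasFDerivAt_iff_hasGradientAt.mp hcomp).gradient
  rw [hfun, hgradeq]
  have hnormgrad : ‖(InnerProductSpace.toDual ℝ E3).symm
      ((4 * vx ^ 3 / vx ^ 4) • (∑' k, g' k x))‖ ≤ 8 * S := by
    rw [LinearIsometryEquiv.norm_map, norm_smul]
    have hscal : 4 * vx ^ 3 / vx ^ 4 = 4 / vx := by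
      field_simp
    have habs : ‖4 * vx ^ 3 / vx ^ 4‖ ≤ 4 := by
      rw [hscal, Real.norm_eq_abs, abs_of_pos (by positivity)]
      rw [div_le_iff₀ hvxpos]
      nlinarith
    calc ‖4 * vx ^ 3 / vx ^ 4‖ * ‖∑' k, g' k x‖ ≤ 4 * (2 * S) := by
          refine mul_le_mul habs hDnorm (norm_nonneg _) (by norm_num)
      _ = 8 * S := by ring
  calc ENNReal.ofReal (‖(InnerProductSpace.toDual ℝ E3).symm
        ((4 * vx ^ 3 / vx ^ 4) • (∑' k, g' k x))‖ ^ 2)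
      ≤ ENNReal.ofReal ((8 * S) ^ 2) := by
        refine ENNReal.ofReal_le_ofReal ?_
        have := norm_nonneg ((InnerProductSpace.toDual ℝ E3).symm
          ((4 * vx ^ 3 / vx ^ 4) • (∑' k, g' k x)))
        nlinarith
    _ = 64 * ENNReal.ofReal S ^ 2 := by
        rw [show (8 * S) ^ 2 = 64 * S ^ 2 by ring, ENNReal.ofReal_mul (by norm_num),
          ENNReal.ofReal_pow hS0]
        norm_num
    _ = 64 * (∑' k, ENNReal.ofReal (m k * (‖x - c k‖ ^ 2)⁻¹)) ^ 2 := by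
        rw [hSdef, ENNReal.ofReal_tsum_of_nonneg
          (fun k => mul_nonneg (hm k).le (by positivity)) hSsum]

/-- Universal `C > 0` such that for positive masses with
`Σ m_k² < ∞` and geometrically separated centers (`1 + ‖c_j − c_k‖ ≥ 2^{|j−k|}`),
the integral of `‖∇ log f‖²` over `ℛ = {x : ∀ k, ‖x − c_k‖ ≥ 2}` is at most
`C Σ m_k²`, where `f = v⁴` and `v` is the Brill–Lindquist conformal factor. -/
theorem gradient_log_conformal_factor_L2_bound :
    ∃ C > (0 : ℝ), ∀ (m : ℕ → ℝ) (c : ℕ → EuclideanSpace ℝ (Fin 3)),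
      (∀ k, 0 < m k) →
      Summable (fun k => (m k) ^ 2) →
      (∀ j k : ℕ, j ≠ k → (2 : ℝ) ^ ((j : ℤ) - (k : ℤ)).natAbs ≤ 1 + ‖c j - c k‖) →
      ∫⁻ x in {x : EuclideanSpace ℝ (Fin 3) | ∀ k, 2 ≤ ‖x - c k‖},
          ENNReal.ofReal
            (‖gradient
                (fun y => Real.log ((1 + ∑' k, m k / (2 * ‖y - c k‖)) ^ 4)) x‖ ^ 2)
          ∂volume
        ≤ ENNReal.ofReal (C * ∑' k, (m k) ^ 2) := by
  set B : ℝ≥0∞ := volume (ball (0 : E3) 1) with hBdef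
  set q : ℝ≥0∞ := ENNReal.ofReal ((Real.sqrt 2)⁻¹) with hqdef
  have hq1 : q < 1 := by
    rw [hqdef]
    refine ENNReal.ofReal_lt_one.2 ?_
    rw [inv_lt_one_iff₀]
    right
    have : (1:ℝ) < Real.sqrt 2 := by
      have h := Real.sqrt_lt_sqrt (by norm_num : (0:ℝ) ≤ 1) (by norm_num : (1:ℝ) < 2)
      simpa using h
    linarith
  set G : ℝ≥0∞ := (1 - q)⁻¹ with hGdef
  have hGne : G ≠ ⊤ := by
    rw [hGdef, Ne, ENNReal.inv_eq_top]
    rw [tsub_eq_zero_iff_le]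
    exact not_le.2 hq1
  have hBne : B ≠ ⊤ := (measure_ball_lt_top).ne
  set KK : ℝ≥0∞ := 24576 * B * G with hKKdef
  have hKKne : KK ≠ ⊤ := by
    rw [hKKdef]
    exact ENNReal.mul_ne_top (ENNReal.mul_ne_top (by norm_num) hBne) hGne
  refine ⟨KK.toReal + 1, by positivity, ?_⟩
  intro m c hm hm2 hsep
  set A : ℕ → E3 → ℝ≥0∞ := fun k x => ENNReal.ofReal (m k * (‖x - c k‖ ^ 2)⁻¹) with hAdef
  have hmeasA : ∀ k, Measurable (A k) := by
    intro k
    apply Measurable.ennreal_ofReal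
    exact measurable_const.mul (((measurable_id.sub_const (c k)).norm.pow_const 2).inv)
  set ℛ : Set E3 := {x : E3 | ∀ k, 2 ≤ ‖x - c k‖} with hRdef
  -- the key per-pair integral bound
  have hIjk : ∀ j k : ℕ, ∫⁻ x in ℛ, A j x * A k x ∂volume
      ≤ (ENNReal.ofReal (m j ^ 2) + ENNReal.ofReal (m k ^ 2))
        * (96 * B * q ^ ((j : ℤ) - (k : ℤ)).natAbs) := by
    intro j k
    have hprod : ∀ x : E3, A j x * A k x
        = ENNReal.ofReal (m j * m k)
          * ENNReal.ofReal ((‖x - c j‖ ^ 2)⁻¹ * (‖x - c k‖ ^ 2)⁻¹) := by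
      intro x
      rw [hAdef]
      rw [← ENNReal.ofReal_mul (mul_nonneg (hm j).le (by positivity)),
        ← ENNReal.ofReal_mul (mul_nonneg (hm j).le (hm k).le)]
      congr 1
      ring
    have hsubset : ℛ ⊆ {x : E3 | 2 ≤ ‖x - c j‖ ∧ 2 ≤ ‖x - c k‖ ∧ ‖x - c j‖ ≤ ‖x - c k‖}
        ∪ {x : E3 | 2 ≤ ‖x - c k‖ ∧ 2 ≤ ‖x - c j‖ ∧ ‖x - c k‖ ≤ ‖x - c j‖} := by
      intro x hx
      rcases le_total ‖x - c j‖ ‖x - c k‖ with h | h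
      · exact Or.inl ⟨hx j, hx k, h⟩
      · exact Or.inr ⟨hx k, hx j, h⟩
    have hq_bound : ENNReal.ofReal (48 / Real.sqrt (1 + ‖c j - c k‖))
        ≤ 48 * q ^ ((j : ℤ) - (k : ℤ)).natAbs := by
      set n := ((j : ℤ) - (k : ℤ)).natAbs with hn
      have hs2 : (0:ℝ) < Real.sqrt 2 := Real.sqrt_pos.2 (by norm_num)
      have hsqrt_ge : (Real.sqrt 2) ^ n ≤ Real.sqrt (1 + ‖c j - c k‖) := by
        rcases eq_or_ne j k with rfl | hne
        · have hn0 : n = 0 := by simp [hn]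
          rw [hn0, pow_zero]
          calc (1:ℝ) = Real.sqrt 1 := Real.sqrt_one.symm
            _ ≤ Real.sqrt (1 + ‖c j - c j‖) := Real.sqrt_le_sqrt (by
                have := norm_nonneg (c j - c j); linarith)
        · have h1 := hsep j k hne
          have h2 : ((Real.sqrt 2) ^ n) ^ 2 = 2 ^ n := by
            rw [← pow_mul, mul_comm, pow_mul, Real.sq_sqrt (by norm_num)]
          calc (Real.sqrt 2) ^ n = Real.sqrt (((Real.sqrt 2) ^ n) ^ 2) :=
                (Real.sqrt_sq (by positivity)).symm
            _ = Real.sqrt (2 ^ n) := by rw [h2]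
            _ ≤ Real.sqrt (1 + ‖c j - c k‖) := Real.sqrt_le_sqrt h1
      have hreal : 48 / Real.sqrt (1 + ‖c j - c k‖) ≤ 48 * ((Real.sqrt 2)⁻¹) ^ n := by
        have hpos : (0:ℝ) < (Real.sqrt 2) ^ n := by positivity
        have hpos2 : (0:ℝ) < Real.sqrt (1 + ‖c j - c k‖) := lt_of_lt_of_le hpos hsqrt_ge
        rw [inv_pow, div_le_iff₀ hpos2]
        rw [mul_assoc]
        have h3 : ((Real.sqrt 2) ^ n)⁻¹ * Real.sqrt (1 + ‖c j - c k‖) ≥ 1 := by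
          rw [ge_iff_le, ← div_eq_inv_mul, le_div_iff₀ hpos]
          simpa using hsqrt_ge
        nlinarith
      calc ENNReal.ofReal (48 / Real.sqrt (1 + ‖c j - c k‖))
          ≤ ENNReal.ofReal (48 * ((Real.sqrt 2)⁻¹) ^ n) := ENNReal.ofReal_le_ofReal hreal
        _ = 48 * q ^ n := by
            rw [ENNReal.ofReal_mul (by norm_num), ENNReal.ofReal_pow (by positivity)]
            norm_num
            rw [hqdef, ENNReal.ofReal_inv_of_pos hs2]
    have hcross : ∫⁻ x in ℛ, ENNReal.ofReal ((‖x - c j‖ ^ 2)⁻¹ * (‖x - c k‖ ^ 2)⁻¹) ∂volume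
        ≤ 2 * (B * ENNReal.ofReal (48 / Real.sqrt (1 + ‖c j - c k‖))) := by
      calc ∫⁻ x in ℛ, ENNReal.ofReal ((‖x - c j‖ ^ 2)⁻¹ * (‖x - c k‖ ^ 2)⁻¹) ∂volume
          ≤ ∫⁻ x in {x : E3 | 2 ≤ ‖x - c j‖ ∧ 2 ≤ ‖x - c k‖ ∧ ‖x - c j‖ ≤ ‖x - c k‖}
              ∪ {x : E3 | 2 ≤ ‖x - c k‖ ∧ 2 ≤ ‖x - c j‖ ∧ ‖x - c k‖ ≤ ‖x - c j‖},
              ENNReal.ofReal ((‖x - c j‖ ^ 2)⁻¹ * (‖x - c k‖ ^ 2)⁻¹) ∂volume :=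
            lintegral_mono_set hsubset
        _ ≤ (∫⁻ x in {x : E3 | 2 ≤ ‖x - c j‖ ∧ 2 ≤ ‖x - c k‖ ∧ ‖x - c j‖ ≤ ‖x - c k‖},
              ENNReal.ofReal ((‖x - c j‖ ^ 2)⁻¹ * (‖x - c k‖ ^ 2)⁻¹) ∂volume)
            + ∫⁻ x in {x : E3 | 2 ≤ ‖x - c k‖ ∧ 2 ≤ ‖x - c j‖ ∧ ‖x - c k‖ ≤ ‖x - c j‖},
              ENNReal.ofReal ((‖x - c j‖ ^ 2)⁻¹ * (‖x - c k‖ ^ 2)⁻¹) ∂volume :=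
            lintegral_union_le _ _ _
        _ ≤ (B * ENNReal.ofReal (48 / Real.sqrt (1 + ‖c j - c k‖)))
            + (B * ENNReal.ofReal (48 / Real.sqrt (1 + ‖c j - c k‖))) := by
            refine add_le_add (cross_half (c j) (c k)) ?_
            have heq : ∀ x : E3, ENNReal.ofReal ((‖x - c j‖ ^ 2)⁻¹ * (‖x - c k‖ ^ 2)⁻¹)
                = ENNReal.ofReal ((‖x - c k‖ ^ 2)⁻¹ * (‖x - c j‖ ^ 2)⁻¹) := fun x => by
              rw [mul_comm]
            calc ∫⁻ x in {x : E3 | 2 ≤ ‖x - c k‖ ∧ 2 ≤ ‖x - c j‖ ∧ ‖x - c k‖ ≤ ‖x - c j‖},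
                  ENNReal.ofReal ((‖x - c j‖ ^ 2)⁻¹ * (‖x - c k‖ ^ 2)⁻¹) ∂volume
                = ∫⁻ x in {x : E3 | 2 ≤ ‖x - c k‖ ∧ 2 ≤ ‖x - c j‖ ∧ ‖x - c k‖ ≤ ‖x - c j‖},
                  ENNReal.ofReal ((‖x - c k‖ ^ 2)⁻¹ * (‖x - c j‖ ^ 2)⁻¹) ∂volume :=
                  lintegral_congr fun x => heq x
              _ ≤ B * ENNReal.ofReal (48 / Real.sqrt (1 + ‖c k - c j‖)) :=
                  cross_half (c k) (c j)
              _ = B * ENNReal.ofReal (48 / Real.sqrt (1 + ‖c j - c k‖)) := by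
                  rw [norm_sub_rev]
        _ = 2 * (B * ENNReal.ofReal (48 / Real.sqrt (1 + ‖c j - c k‖))) := (two_mul _).symm
    have hmm : ENNReal.ofReal (m j * m k)
        ≤ ENNReal.ofReal (m j ^ 2) + ENNReal.ofReal (m k ^ 2) := by
      rw [← ENNReal.ofReal_add (by positivity) (by positivity)]
      refine ENNReal.ofReal_le_ofReal ?_
      nlinarith [sq_nonneg (m j - m k)]
    calc ∫⁻ x in ℛ, A j x * A k x ∂volume
        = ∫⁻ x in ℛ, ENNReal.ofReal (m j * m k)
            * ENNReal.ofReal ((‖x - c j‖ ^ 2)⁻¹ * (‖x - c k‖ ^ 2)⁻¹) ∂volume :=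
          lintegral_congr fun x => hprod x
      _ = ENNReal.ofReal (m j * m k) * ∫⁻ x in ℛ,
            ENNReal.ofReal ((‖x - c j‖ ^ 2)⁻¹ * (‖x - c k‖ ^ 2)⁻¹) ∂volume := by
          rw [lintegral_const_mul]
          apply Measurable.ennreal_ofReal
          exact (((measurable_id.sub_const (c j)).norm.pow_const 2).inv).mul
            (((measurable_id.sub_const (c k)).norm.pow_const 2).inv)
      _ ≤ ENNReal.ofReal (m j * m k)
          * (2 * (B * (48 * q ^ ((j : ℤ) - (k : ℤ)).natAbs))) := by
          refine mul_le_mul_right (hcross.trans ?_) _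
          exact mul_le_mul_right (mul_le_mul_right hq_bound _) _
      _ ≤ (ENNReal.ofReal (m j ^ 2) + ENNReal.ofReal (m k ^ 2))
          * (96 * B * q ^ ((j : ℤ) - (k : ℤ)).natAbs) := by
          refine mul_le_mul' hmm (le_of_eq ?_)
          ring
  -- assemble
  have hptwise : ∀ x ∈ ℛ, ENNReal.ofReal
      (‖gradient (fun y => Real.log ((1 + ∑' k, m k / (2 * ‖y - c k‖)) ^ 4)) x‖ ^ 2)
      ≤ 64 * (∑' k, A k x) ^ 2 :=
    fun x hx => pointwise_grad_bound m c hm hm2 hsep x hx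
  have hmeasRHS : Measurable fun x : E3 => 64 * (∑' k, A k x) ^ 2 :=
    ((Measurable.ennreal_tsum hmeasA).pow_const 2).const_mul 64
  have hmeas_inner : ∀ j, Measurable fun x : E3 => ∑' k, A j x * A k x :=
    fun j => Measurable.ennreal_tsum fun k => (hmeasA j).mul (hmeasA k)
  set M' : ℝ≥0∞ := ∑' j, ENNReal.ofReal (m j ^ 2) with hM'def
  have hsum_q : ∀ j : ℕ, (∑' k : ℕ, q ^ ((j : ℤ) - (k : ℤ)).natAbs) ≤ 2 * G := by
    intro j
    rw [hGdef]
    exact tsum_pow_natAbs_le q j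
  have hsum_q' : ∀ k : ℕ, (∑' j : ℕ, q ^ ((j : ℤ) - (k : ℤ)).natAbs) ≤ 2 * G := by
    intro k
    have hcongr : ∀ j : ℕ, q ^ ((j : ℤ) - (k : ℤ)).natAbs = q ^ ((k : ℤ) - (j : ℤ)).natAbs :=
      fun j => by congr 1; omega
    rw [tsum_congr hcongr]
    exact hsum_q k
  have hfirst : ∑' j : ℕ, ∑' k : ℕ, ENNReal.ofReal (m j ^ 2)
      * (96 * B * q ^ ((j : ℤ) - (k : ℤ)).natAbs) ≤ M' * (96 * B * (2 * G)) := by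
    calc ∑' j : ℕ, ∑' k : ℕ, ENNReal.ofReal (m j ^ 2) * (96 * B * q ^ ((j : ℤ) - (k : ℤ)).natAbs)
        ≤ ∑' j : ℕ, ENNReal.ofReal (m j ^ 2) * (96 * B * (2 * G)) := by
          refine ENNReal.tsum_le_tsum fun j => ?_
          rw [ENNReal.tsum_mul_left, ENNReal.tsum_mul_left]
          exact mul_le_mul_right (mul_le_mul_right (hsum_q j) _) _
      _ = M' * (96 * B * (2 * G)) := ENNReal.tsum_mul_right
  have hsecond : ∑' j : ℕ, ∑' k : ℕ, ENNReal.ofReal (m k ^ 2)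
      * (96 * B * q ^ ((j : ℤ) - (k : ℤ)).natAbs) ≤ M' * (96 * B * (2 * G)) := by
    rw [ENNReal.tsum_comm]
    calc ∑' k : ℕ, ∑' j : ℕ, ENNReal.ofReal (m k ^ 2) * (96 * B * q ^ ((j : ℤ) - (k : ℤ)).natAbs)
        ≤ ∑' k : ℕ, ENNReal.ofReal (m k ^ 2) * (96 * B * (2 * G)) := by
          refine ENNReal.tsum_le_tsum fun k => ?_
          rw [ENNReal.tsum_mul_left, ENNReal.tsum_mul_left]
          exact mul_le_mul_right (mul_le_mul_right (hsum_q' k) _) _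
      _ = M' * (96 * B * (2 * G)) := ENNReal.tsum_mul_right
  have hM' : M' = ENNReal.ofReal (∑' k, m k ^ 2) :=
    (ENNReal.ofReal_tsum_of_nonneg (fun k => sq_nonneg _) hm2).symm
  have hKKle : KK ≤ ENNReal.ofReal (KK.toReal + 1) := by
    conv_lhs => rw [← ENNReal.ofReal_toReal hKKne]
    exact ENNReal.ofReal_le_ofReal (by linarith [ENNReal.toReal_nonneg (a := KK)])
  calc ∫⁻ x in ℛ, ENNReal.ofReal
        (‖gradient (fun y => Real.log ((1 + ∑' k, m k / (2 * ‖y - c k‖)) ^ 4)) x‖ ^ 2) ∂volume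
      ≤ ∫⁻ x in ℛ, 64 * (∑' k, A k x) ^ 2 ∂volume := setLIntegral_mono hmeasRHS hptwise
    _ = 64 * ∫⁻ x in ℛ, (∑' k, A k x) ^ 2 ∂volume :=
        lintegral_const_mul 64 ((Measurable.ennreal_tsum hmeasA).pow_const 2)
    _ = 64 * ∫⁻ x in ℛ, ∑' j : ℕ, ∑' k : ℕ, A j x * A k x ∂volume := by
        congr 1
        refine lintegral_congr fun x => ?_
        rw [sq, ← ENNReal.tsum_mul_right]
        exact tsum_congr fun j => ENNReal.tsum_mul_left.symm
    _ = 64 * ∑' j : ℕ, ∫⁻ x in ℛ, ∑' k : ℕ, A j x * A k x ∂volume := by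
        rw [lintegral_tsum (fun j => (hmeas_inner j).aemeasurable)]
    _ = 64 * ∑' j : ℕ, ∑' k : ℕ, ∫⁻ x in ℛ, A j x * A k x ∂volume := by
        congr 1
        exact tsum_congr fun j =>
          lintegral_tsum fun k => ((hmeasA j).mul (hmeasA k)).aemeasurable
    _ ≤ 64 * ∑' j : ℕ, ∑' k : ℕ, (ENNReal.ofReal (m j ^ 2) + ENNReal.ofReal (m k ^ 2))
          * (96 * B * q ^ ((j : ℤ) - (k : ℤ)).natAbs) :=
        mul_le_mul_right (ENNReal.tsum_le_tsum fun j =>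
          ENNReal.tsum_le_tsum fun k => hIjk j k) 64
    _ = 64 * ((∑' j : ℕ, ∑' k : ℕ, ENNReal.ofReal (m j ^ 2)
          * (96 * B * q ^ ((j : ℤ) - (k : ℤ)).natAbs))
        + ∑' j : ℕ, ∑' k : ℕ, ENNReal.ofReal (m k ^ 2)
          * (96 * B * q ^ ((j : ℤ) - (k : ℤ)).natAbs)) := by
        rw [← ENNReal.tsum_add]
        congr 1
        refine tsum_congr fun j => ?_
        rw [← ENNReal.tsum_add]
        exact tsum_congr fun k => add_mul _ _ _
    _ ≤ 64 * (M' * (96 * B * (2 * G)) + M' * (96 * B * (2 * G))) :=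
        mul_le_mul_right (add_le_add hfirst hsecond) _
    _ = KK * M' := by rw [hKKdef]; ring
    _ ≤ ENNReal.ofReal ((KK.toReal + 1) * ∑' k, m k ^ 2) := by
        rw [hM', ENNReal.ofReal_mul (by positivity)]
        exact mul_le_mul_left hKKle _
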